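/- Fix an integer b ≥ 2 and let T_n denote the set of even subpowers of b lying in {1, ..., n}. For every positive integer n, |T_n| ≥ bn/(b+1) − (1/2)·(log_b(n) + 1). -/

import Mathlib

/-- `x` is an `i`-th subpower of `b`: `x = b^i * y` for some `y ≥ 1` with `b ∤ y`. -/
def IsSubpower (b i x : ℕ) : Prop :=
  ∃ y : ℕ, 0 < y ∧ ¬ b ∣ y ∧ x = b ^ i * y

/-- `x` is an even subpower of `b`. -/
def IsEvenSubpower (b x : ℕ) : Prop :=
  ∃ i : ℕ, Even i ∧ IsSubpower b i x

attribute [local instance] Classical.propDecidable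

lemma subpower_iff {b : ℕ} (hb : 2 ≤ b) (i x : ℕ) (hx : 1 ≤ x) :
    IsSubpower b i x ↔ b ^ i ∣ x ∧ ¬ b ^ (i + 1) ∣ x := by
  have hbpos : 0 < b ^ i := pow_pos (by omega) i
  constructor
  · rintro ⟨y, hy, hby, rfl⟩
    refine ⟨Dvd.intro y rfl, ?_⟩
    rintro ⟨z, hz⟩
    apply hby
    refine ⟨z, ?_⟩
    rw [pow_succ, mul_assoc] at hz
    exact Nat.eq_of_mul_eq_mul_left hbpos hz
  · rintro ⟨⟨y, rfl⟩, h2⟩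
    refine ⟨y, ?_, ?_, rfl⟩
    · rcases Nat.eq_zero_or_pos y with rfl | h
      · simp at hx
      · exact h
    · rintro ⟨z, rfl⟩
      exact h2 ⟨z, by ring⟩

lemma subpower_disjoint {b : ℕ} (hb : 2 ≤ b) {i j x : ℕ} (hij : i < j)
    (h1 : IsSubpower b i x) (h2 : IsSubpower b j x) : False := by
  obtain ⟨y, hy, hby, rfl⟩ := h1
  obtain ⟨z, hz, hbz, he⟩ := h2
  have hbpos : 0 < b ^ i := pow_pos (by omega) i
  have : y = b ^ (j - i) * z := by
    have h : b ^ i * y = b ^ i * (b ^ (j - i) * z) := by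
      rw [he, ← mul_assoc, ← pow_add]
      congr 2
      omega
    exact Nat.eq_of_mul_eq_mul_left hbpos h
  apply hby
  rw [this]
  exact Dvd.dvd.mul_right (dvd_pow_self b (by omega)) z

lemma card_subpower {b : ℕ} (hb : 2 ≤ b) (n i : ℕ) :
    ((Finset.Icc 1 n).filter (IsSubpower b i)).card = n / b ^ i - n / b ^ (i + 1) := by
  have hIcc : Finset.Icc 1 n = Finset.Ioc 0 n := rfl
  have hS : ((Finset.Icc 1 n).filter (IsSubpower b i)) =
      ((Finset.Ioc 0 n).filter (b ^ i ∣ ·)) \ ((Finset.Ioc 0 n).filter (b ^ (i + 1) ∣ ·)) := by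
    ext x
    simp only [Finset.mem_sdiff, Finset.mem_filter, Finset.mem_Ioc, Finset.mem_Icc]
    constructor
    · rintro ⟨⟨h1, h2⟩, h3⟩
      rw [subpower_iff hb i x h1] at h3
      exact ⟨⟨⟨by omega, h2⟩, h3.1⟩, fun h => h3.2 h.2⟩
    · rintro ⟨⟨⟨h0, h2⟩, hdvd⟩, hnd⟩
      have h1 : 1 ≤ x := h0
      refine ⟨⟨h1, h2⟩, (subpower_iff hb i x h1).2 ⟨hdvd, fun hd => hnd ⟨⟨h0, h2⟩, hd⟩⟩⟩
  rw [hS, Finset.card_sdiff_of_subset]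
  · rw [Nat.Ioc_filter_dvd_card_eq_div, Nat.Ioc_filter_dvd_card_eq_div]
  · intro x hx
    simp only [Finset.mem_filter] at hx ⊢
    exact ⟨hx.1, dvd_trans (pow_dvd_pow b (Nat.le_succ i)) hx.2⟩

lemma card_even_ge {b : ℕ} (hb : 2 ≤ b) (n K : ℕ) :
    ∑ k ∈ Finset.range (K + 1), (n / b ^ (2 * k) - n / b ^ (2 * k + 1)) ≤
      ((Finset.Icc 1 n).filter (IsEvenSubpower b)).card := by
  have hsum : ∑ k ∈ Finset.range (K + 1), (n / b ^ (2 * k) - n / b ^ (2 * k + 1)) =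
      ((Finset.range (K + 1)).biUnion
        (fun k => (Finset.Icc 1 n).filter (IsSubpower b (2 * k)))).card := by
    rw [Finset.card_biUnion]
    · exact Finset.sum_congr rfl fun k _ => (card_subpower hb n (2 * k)).symm
    · intro x hx y hy hxy
      simp only [Finset.disjoint_left, Finset.mem_filter]
      rintro a ⟨ha1, ha2⟩ ⟨hb1, hb2⟩
      rcases lt_trichotomy x y with h | h | h
      · exact subpower_disjoint hb (by omega : 2 * x < 2 * y) ha2 hb2
      · exact hxy h
      · exact subpower_disjoint hb (by omega : 2 * y < 2 * x) hb2 ha2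
  rw [hsum]
  apply Finset.card_le_card
  intro x hx
  simp only [Finset.mem_biUnion, Finset.mem_filter] at hx ⊢
  obtain ⟨k, _, hx1, hx2⟩ := hx
  exact ⟨hx1, ⟨2 * k, even_two_mul k, hx2⟩⟩

lemma geom_aux {B : ℝ} (hB : 2 ≤ B) (c : ℝ) (K : ℕ) :
    ∑ k ∈ Finset.range (K + 1), (c / B ^ (2 * k) - c / B ^ (2 * k + 1)) =
      c * B / (B + 1) - c * B / ((B + 1) * B ^ (2 * K + 2)) := by
  have hB0 : B ≠ 0 := by positivity
  have hB1 : B + 1 ≠ 0 := by positivity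
  induction K with
  | zero =>
    simp only [zero_add, Finset.sum_range_one, mul_zero, pow_zero, pow_one]
    field_simp
    ring
  | succ K ih =>
    rw [Finset.sum_range_succ, ih]
    have e1 : 2 * (K + 1) = 2 * K + 2 := by ring
    rw [e1]
    have h3 : B ^ (2 * K + 2 + 1) = B ^ (2 * K + 2) * B := by rw [← pow_succ]
    have h4 : B ^ (2 * K + 2 + 2) = B ^ (2 * K + 2) * B ^ 2 := by rw [← pow_add]
    rw [h3, h4]
    have hp : (B : ℝ) ^ (2 * K + 2) ≠ 0 := pow_ne_zero _ hB0
    field_simp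
    ring

theorem stmt7 (b : ℕ) (hb : 2 ≤ b) (n : ℕ) (hn : 1 ≤ n) :
    (b : ℝ) * n / ((b : ℝ) + 1) - (1 / 2) * (Real.logb b n + 1) ≤
      (((Finset.Icc 1 n).filter (IsEvenSubpower b)).card : ℝ) := by
  set J := Nat.log b n with hJ
  set K := J / 2 with hK
  set B := (b : ℝ) with hBdef
  have hB : 2 ≤ B := by rw [hBdef]; exact_mod_cast hb
  have hB0 : (0:ℝ) < B := by linarith
  have hB1 : (0:ℝ) < B + 1 := by linarith
  have hJn : b ^ J ≤ n := Nat.pow_log_le_self b (by omega)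
  have hnJ : n < b ^ (J + 1) := Nat.lt_pow_succ_log_self (by omega) n
  have hlogJ : (J : ℝ) ≤ Real.logb B n := Real.natLog_le_logb n b
  -- real sum lower bound for the card
  have hcast_le : ∀ m : ℕ, 0 < m → (n : ℝ) / m - 1 < ((n / m : ℕ) : ℝ) := by
    intro m hm
    have h : n < (n / m + 1) * m := by
      have h1 := Nat.div_add_mod n m
      have h2 := Nat.mod_lt n hm
      calc n = m * (n / m) + n % m := h1.symm
      _ < m * (n / m) + m := by omega
      _ = (n / m + 1) * m := by ring
    have hR : (n : ℝ) < (((n / m : ℕ) : ℝ) + 1) * m := by exact_mod_cast h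
    have hm' : (0:ℝ) < m := by exact_mod_cast hm
    rw [sub_lt_iff_lt_add, div_lt_iff₀ hm']
    linarith [hR]
  have hcast_ge : ∀ m : ℕ, 0 < m → ((n / m : ℕ) : ℝ) ≤ (n : ℝ) / m :=
    fun m hm => Nat.cast_div_le
  have hdiv_le : ∀ k : ℕ, n / b ^ (2 * k + 1) ≤ n / b ^ (2 * k) :=
    fun k => Nat.div_le_div_left (pow_le_pow_right₀ (by omega) (by omega)) (pow_pos (by omega) _)
  -- cast of the nat sum
  have hsum_cast : ∀ k : ℕ, ((n / b ^ (2 * k) - n / b ^ (2 * k + 1) : ℕ) : ℝ) =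
      ((n / b ^ (2 * k) : ℕ) : ℝ) - ((n / b ^ (2 * k + 1) : ℕ) : ℝ) := by
    intro k
    rw [Nat.cast_sub (hdiv_le k)]
  have hpowpos : ∀ m : ℕ, 0 < b ^ m := fun m => pow_pos (by omega) m
  have hpowR : ∀ m : ℕ, ((b ^ m : ℕ) : ℝ) = B ^ m := fun m => by push_cast; rfl
  -- term bounds
  have hterm0 : (n : ℝ) / B ^ (2 * 0) - (n : ℝ) / B ^ (2 * 0 + 1) ≤
      ((n / b ^ (2 * 0) - n / b ^ (2 * 0 + 1) : ℕ) : ℝ) := by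
    rw [hsum_cast 0]
    have hb1 : ((n / b ^ (2 * 0 + 1) : ℕ) : ℝ) ≤ (n : ℝ) / B ^ (2 * 0 + 1) := by
      have := hcast_ge (b ^ (2 * 0 + 1)) (hpowpos _)
      rwa [hpowR] at this
    have hn0 : ((n / b ^ (2 * 0) : ℕ) : ℝ) = (n : ℝ) := by norm_num
    have hn0' : (n : ℝ) / B ^ (2 * 0) = (n : ℝ) := by norm_num
    rw [hn0, hn0']
    linarith
  have htermk : ∀ k : ℕ, (n : ℝ) / B ^ (2 * k) - (n : ℝ) / B ^ (2 * k + 1) - 1 ≤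
      ((n / b ^ (2 * k) - n / b ^ (2 * k + 1) : ℕ) : ℝ) := by
    intro k
    rw [hsum_cast k]
    have h1 : (n : ℝ) / B ^ (2 * k) - 1 < ((n / b ^ (2 * k) : ℕ) : ℝ) := by
      have := hcast_le (b ^ (2 * k)) (hpowpos _)
      rwa [hpowR] at this
    have h2 : ((n / b ^ (2 * k + 1) : ℕ) : ℝ) ≤ (n : ℝ) / B ^ (2 * k + 1) := by
      have := hcast_ge (b ^ (2 * k + 1)) (hpowpos _)
      rwa [hpowR] at this
    linarith
  -- main sum lower bound
  have hmain : (n : ℝ) * B / (B + 1) - (n : ℝ) * B / ((B + 1) * B ^ (2 * K + 2)) - K ≤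
      ((∑ k ∈ Finset.range (K + 1), (n / b ^ (2 * k) - n / b ^ (2 * k + 1)) : ℕ) : ℝ) := by
    rw [← geom_aux hB (n : ℝ) K]
    rw [Nat.cast_sum]
    rw [Finset.sum_range_succ', Finset.sum_range_succ']
    have hle : ∑ k ∈ Finset.range K,
        ((n : ℝ) / B ^ (2 * (k+1)) - (n : ℝ) / B ^ (2 * (k+1) + 1) - 1) ≤
        ∑ k ∈ Finset.range K, ((n / b ^ (2 * (k+1)) - n / b ^ (2 * (k+1) + 1) : ℕ) : ℝ) :=
      Finset.sum_le_sum fun k _ => htermk (k+1)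
    have hconst : ∑ k ∈ Finset.range K,
        ((n : ℝ) / B ^ (2 * (k+1)) - (n : ℝ) / B ^ (2 * (k+1) + 1) - 1) =
        (∑ k ∈ Finset.range K, ((n : ℝ) / B ^ (2 * (k+1)) - (n : ℝ) / B ^ (2 * (k+1) + 1))) - K := by
      rw [Finset.sum_sub_distrib, Finset.sum_const, Finset.card_range]
      simp
    rw [hconst] at hle
    have h0 := hterm0
    push_cast
    push_cast at hle h0
    linarith
  -- error bound
  have herr : (n : ℝ) * B / ((B + 1) * B ^ (2 * K + 2)) + K ≤ (1 / 2) * (Real.logb B n + 1) := by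
    have hJpar : J = 2 * K ∨ J = 2 * K + 1 := by omega
    rcases hJpar with hpar | hpar
    · -- J even: n < b^(2K+1)
      have hlt : (n : ℝ) < B ^ (2 * K + 1) := by
        have : n < b ^ (2 * K + 1) := by rw [← hpar]; exact hnJ
        calc (n:ℝ) < ((b ^ (2*K+1) : ℕ) : ℝ) := by exact_mod_cast this
        _ = B ^ (2*K+1) := hpowR _
      have h1 : (n : ℝ) * B / ((B + 1) * B ^ (2 * K + 2)) ≤ 1 / 2 := by
        rw [div_le_iff₀ (by positivity)]
        have hpow : B ^ (2*K+2) = B ^ (2*K+1) * B := by rw [← pow_succ]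
        rw [hpow]
        have hP : (0:ℝ) < B ^ (2*K+1) := pow_pos hB0 _
        nlinarith [mul_le_mul_of_nonneg_right hlt.le hB0.le,
          mul_nonneg (by linarith : (0:ℝ) ≤ B - 1) (mul_pos hP hB0).le]
      have h2 : (K : ℝ) ≤ Real.logb B n / 2 := by
        have : (2 * K : ℝ) ≤ Real.logb B n := by
          calc (2 * K : ℝ) = (J : ℝ) := by rw [hpar]; push_cast; ring
          _ ≤ _ := hlogJ
        linarith
      linarith
    · -- J odd: n < b^(2K+2)
      have hlt : (n : ℝ) < B ^ (2 * K + 2) := by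
        have : n < b ^ (2 * K + 2) := by
          have : 2 * K + 2 = J + 1 := by omega
          rw [this]; exact hnJ
        calc (n:ℝ) < ((b ^ (2*K+2) : ℕ) : ℝ) := by exact_mod_cast this
        _ = B ^ (2*K+2) := hpowR _
      have h1 : (n : ℝ) * B / ((B + 1) * B ^ (2 * K + 2)) ≤ 1 := by
        rw [div_le_one (by positivity)]
        have hP : (0:ℝ) < B ^ (2*K+2) := pow_pos hB0 _
        nlinarith [mul_le_mul_of_nonneg_right hlt.le hB0.le, hP]
      have h2 : (K : ℝ) + 1 / 2 ≤ Real.logb B n / 2 := by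
        have : (2 * K + 1 : ℝ) ≤ Real.logb B n := by
          calc (2 * K + 1 : ℝ) = (J : ℝ) := by rw [hpar]; push_cast; ring
          _ ≤ _ := hlogJ
        linarith
      linarith
  have hfinal := card_even_ge hb n K
  have hfinalR : ((∑ k ∈ Finset.range (K + 1), (n / b ^ (2 * k) - n / b ^ (2 * k + 1)) : ℕ) : ℝ) ≤
      (((Finset.Icc 1 n).filter (IsEvenSubpower b)).card : ℝ) := by exact_mod_cast hfinal
  have : (B : ℝ) * n / (B + 1) = (n : ℝ) * B / (B + 1) := by ring
  rw [hBdef] at *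
  linarith [hmain, herr, hfinalR]
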